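/- Suppose A is a central arrangement in K^3 such that there exist two codimension-2 flats p_1, p_2 ∈ L(A)_2 with μ(p_1) + μ(p_2) = |A| − 2, and no plane of A contains both p_1 and p_2. Then the minimal restriction number t_A equals 2. -/

import Mathlib

open MvPolynomial

/-- The polynomial ring `S = K[x_1, ..., x_ℓ]`. -/
abbrev MvS (K : Type*) [Field K] (ℓ : ℕ) := MvPolynomial (Fin ℓ) K

variable {K : Type*} [Field K] {ℓ : ℕ}

/-- The linear functional on `K^ℓ` with coefficient vector `c`. -/
noncomputable def ellf (c : Fin ℓ → K) : (Fin ℓ → K) →ₗ[K] K :=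
  ∑ i, c i • LinearMap.proj i

/-- The hyperplane (through the origin) with coefficient vector `c`. -/
noncomputable def hypl (c : Fin ℓ → K) : Submodule K (Fin ℓ → K) :=
  LinearMap.ker (ellf c)

/-- The degree-one defining form `α = ∑ c_i x_i` of the hyperplane with coefficients `c`. -/
noncomputable def linForm (c : Fin ℓ → K) : MvS K ℓ := ∑ i, C (c i) * X i

/-- The defining polynomial `Q(A) = ∏_{H ∈ A} α_H` of an arrangement given by a finite
set of coefficient vectors. -/
noncomputable def Qpoly (A : Finset (Fin ℓ → K)) : MvS K ℓ := ∏ c ∈ A, linForm c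

/-- The module of logarithmic derivations of a reduced defining polynomial `Q`:
derivations `θ = ∑ θ_i ∂_i` (identified with their coefficient tuples) with `θ(Q) ∈ Q·S`. -/
def DerQ {K : Type*} [Field K] {ℓ : ℕ} (Q : MvS K ℓ) : Set (Fin ℓ → MvS K ℓ) :=
  {θ | Q ∣ ∑ i, θ i * pderiv i Q}

/-- The logarithmic derivation module `D(A)` of an arrangement. -/
noncomputable def DerA (A : Finset (Fin ℓ → K)) : Set (Fin ℓ → MvS K ℓ) :=
  DerQ (Qpoly A)

/-- A derivation is homogeneous of degree `d` if all of its coefficient polynomials are. -/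
def IsHomog {K : Type*} [Field K] {ℓ : ℕ} (θ : Fin ℓ → MvS K ℓ) (d : ℕ) : Prop :=
  ∀ i, (θ i).IsHomogeneous d

/-- A finite set of coefficient vectors honestly represents a central arrangement:
all forms are nonzero and no two define the same hyperplane. -/
def IsArrangement (A : Finset (Fin ℓ → K)) : Prop :=
  (∀ c ∈ A, c ≠ 0) ∧ ∀ c ∈ A, ∀ c' ∈ A, hypl c = hypl c' → c = c'

/-- `|(A ∪ {H})^H|`, the number of distinct intersections `H' ∩ H` for `H' ∈ A`. -/
noncomputable def restrictCount (A : Finset (Fin ℓ → K)) (h : Fin ℓ → K) : ℕ :=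
  letI := Classical.decEq (Submodule K (Fin ℓ → K))
  (A.image fun c => hypl c ⊓ hypl h).card

/-- `h` defines a genuine hyperplane that does not belong to the arrangement `A`. -/
def NotInArr (A : Finset (Fin ℓ → K)) (h : Fin ℓ → K) : Prop :=
  h ≠ 0 ∧ ∀ c ∈ A, hypl c ≠ hypl h

/-- `G` is a set of generators of `D(A)` as an `S`-module. -/
def Generates (A : Finset (Fin ℓ → K)) (G : Set (Fin ℓ → MvS K ℓ)) : Prop :=
  (∀ θ ∈ G, θ ∈ DerA A) ∧ ∀ θ ∈ DerA A, θ ∈ Submodule.span (MvS K ℓ) G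

/-- `G` is a minimal set of generators of `D(A)`. -/
def IsMinGen (A : Finset (Fin ℓ → K)) (G : Set (Fin ℓ → MvS K ℓ)) : Prop :=
  Generates A G ∧ ∀ G' ⊂ G, ¬ Generates A G'

/-- Every member of `G` is a nonzero homogeneous derivation. -/
def HomogGens {K : Type*} [Field K] {ℓ : ℕ} (G : Set (Fin ℓ → MvS K ℓ)) : Prop :=
  ∀ θ ∈ G, θ ≠ 0 ∧ ∃ d, IsHomog θ d

/-- `d` is the maximal degree occurring among the (nonzero homogeneous) members of `G`. -/
def MaxDeg {K : Type*} [Field K] {ℓ : ℕ} (G : Set (Fin ℓ → MvS K ℓ)) (d : ℕ) : Prop :=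
  (∀ θ ∈ G, ∀ e, IsHomog θ e → e ≤ d) ∧ ∃ θ ∈ G, IsHomog θ d

/-- The minimal restriction number `t_A`. -/
noncomputable def tA (A : Finset (Fin ℓ → K)) : ℕ :=
  sInf {n | ∃ h : Fin ℓ → K, NotInArr A h ∧ n = restrictCount A h}

/-- The intersection `∩_{c ∈ B} H_c` of the hyperplanes of `B`. -/
noncomputable def interSub (B : Finset (Fin ℓ → K)) : Submodule K (Fin ℓ → K) :=
  ⨅ c ∈ B, hypl c

/-- The characteristic polynomial of a central arrangement, via Whitney's formula
`χ(A,t) = ∑_{B ⊆ A} (-1)^{|B|} t^{dim ∩B}`. -/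
noncomputable def charPolyA (A : Finset (Fin ℓ → K)) : Polynomial ℤ :=
  ∑ B ∈ A.powerset,
    ((-1 : Polynomial ℤ) ^ B.card) * Polynomial.X ^ (Module.finrank K (interSub B))

/-- `D(Q)` is a free `S`-module with a homogeneous basis of degrees `e 0, ..., e (ℓ-1)`. -/
def IsFreeQWithExp {K : Type*} [Field K] {ℓ : ℕ} (Q : MvS K ℓ) (e : Fin ℓ → ℕ) : Prop :=
  ∃ θ : Fin ℓ → (Fin ℓ → MvS K ℓ),
    (∀ i, θ i ∈ DerQ Q ∧ θ i ≠ 0 ∧ IsHomog (θ i) (e i)) ∧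
    LinearIndependent (MvS K ℓ) θ ∧
    ∀ φ ∈ DerQ Q, φ ∈ Submodule.span (MvS K ℓ) (Set.range θ)

/-- `D(Q)` is a free `S`-module. -/
def IsFreeQ {K : Type*} [Field K] {ℓ : ℕ} (Q : MvS K ℓ) : Prop :=
  ∃ e, IsFreeQWithExp Q e

/-- The arrangement `A` is free. -/
noncomputable def IsFreeArr (A : Finset (Fin ℓ → K)) : Prop := IsFreeQ (Qpoly A)

/-- The rank of a set of hyperplanes: the codimension of their common intersection,
i.e. the dimension of the span of their defining functionals. -/
noncomputable def rkSet (s : Set (Fin ℓ → K)) : ℕ :=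
  Module.finrank K (Submodule.span K s)

/-- The Euler derivation `θ_E = ∑ x_i ∂_i`. -/
noncomputable def eulerDer (K : Type*) [Field K] (ℓ : ℕ) : Fin ℓ → MvS K ℓ :=
  fun i => X i

/-- `B` is solvable in `A` (Jambu–Papadima). -/
def Solvable (B A : Finset (Fin ℓ → K)) : Prop :=
  B ⊆ A ∧
  (∀ α ∈ B, ∀ β ∈ B, α ≠ β → ∀ a ∈ A, a ∉ B → rkSet {α, β, a} = 3) ∧
  (∀ a ∈ A, a ∉ B → ∀ b ∈ A, b ∉ B → a ≠ b → ∃ α ∈ B, rkSet {a, b, α} = 2) ∧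
  (∀ a ∈ A, a ∉ B → ∀ b ∈ A, b ∉ B → ∀ c ∈ A, c ∉ B →
    a ≠ b → a ≠ c → b ≠ c →
    ∀ α ∈ B, ∀ β ∈ B, ∀ γ ∈ B,
      rkSet {a, b, α} = 2 → rkSet {a, c, β} = 2 → rkSet {b, c, γ} = 2 →
      rkSet {α, β, γ} ≤ 2)

/-- The hyperplane `{x_i = x_j}` of a graphic arrangement. -/
noncomputable def edgeHyp (K : Type*) [Field K] {ℓ : ℕ} (i j : Fin ℓ) :
    Submodule K (Fin ℓ → K) :=
  LinearMap.ker ((LinearMap.proj (R := K) (φ := fun _ : Fin ℓ => K) i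
    - LinearMap.proj (R := K) (φ := fun _ : Fin ℓ => K) j))

/-- The coefficient vector of the form `x_i - x_j`. -/
def eform (K : Type*) [Field K] {ℓ : ℕ} (i j : Fin ℓ) : Fin ℓ → K :=
  fun t => if t = i then 1 else if t = j then -1 else 0

/-- The set of defining forms of the graphic arrangement `A_G`. -/
noncomputable def graphForms (K : Type*) [Field K] {ℓ : ℕ} (G : SimpleGraph (Fin ℓ)) :
    Finset (Fin ℓ → K) :=
  letI := Classical.decEq (Fin ℓ → K)
  letI : DecidablePred (fun p : Fin ℓ × Fin ℓ => G.Adj p.1 p.2 ∧ p.1 < p.2) :=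
    fun _ => Classical.propDecidable _
  Finset.image (fun p : Fin ℓ × Fin ℓ => eform K p.1 p.2)
    (Finset.univ.filter fun p : Fin ℓ × Fin ℓ => G.Adj p.1 p.2 ∧ p.1 < p.2)

/-- `Tri(G)`: the maximal number of new triangles created by adding a single edge. -/
noncomputable def TriG {ℓ : ℕ} (G : SimpleGraph (Fin ℓ)) : ℕ :=
  sSup {n | ∃ u v : Fin ℓ, u ≠ v ∧ ¬ G.Adj u v ∧
    n = {w | G.Adj u w ∧ G.Adj v w}.ncard}

section Stmt5Helpers
open Matrix

lemma ellf_apply (c x : Fin ℓ → K) : ellf c x = ∑ i, c i * x i := by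
  simp [ellf]

lemma ellf_dot (c x : Fin ℓ → K) : ellf c x = c ⬝ᵥ x := by
  rw [ellf_apply]; rfl

lemma ellf_ne_zero {c : Fin ℓ → K} (hc : c ≠ 0) : ellf c ≠ 0 := by
  obtain ⟨j, hj⟩ : ∃ j, c j ≠ 0 := by
    by_contra h; push_neg at h; exact hc (funext h)
  intro h
  apply hj
  have := congrFun (congrArg (fun f : (Fin ℓ → K) →ₗ[K] K => (f : (Fin ℓ → K) → K)) h) (Pi.single j 1)
  simpa [ellf_apply, Pi.single_apply, mul_ite, Finset.sum_ite_eq'] using this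

lemma finrank_hypl {c : Fin 3 → K} (hc : c ≠ 0) : Module.finrank K (hypl c) = 2 := by
  have h1 : Module.finrank K (LinearMap.range (ellf c)) = 1 := by
    have hne : LinearMap.range (ellf c) ≠ ⊥ := by
      rw [Ne, LinearMap.range_eq_bot]; exact ellf_ne_zero hc
    have hle : Module.finrank K (LinearMap.range (ellf c)) ≤ 1 := by
      simpa using Submodule.finrank_le (LinearMap.range (ellf c))
    have hiff := Submodule.finrank_eq_zero (S := LinearMap.range (ellf c))
    have hpos : 0 < Module.finrank K (LinearMap.range (ellf c)) :=
      Nat.pos_of_ne_zero (fun h0 => hne (hiff.mp h0))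
    omega
  have := LinearMap.finrank_range_add_finrank_ker (ellf c)
  rw [h1] at this
  have h3 : Module.finrank K (Fin 3 → K) = 3 := by simp
  rw [h3] at this
  rw [hypl]; omega

lemma inf_dim_one {c h : Fin 3 → K} (hc : c ≠ 0) (hh : h ≠ 0) (hne : hypl c ≠ hypl h) :
    Module.finrank K (hypl c ⊓ hypl h : Submodule K (Fin 3 → K)) = 1 := by
  have hsum := Submodule.finrank_sup_add_finrank_inf_eq (hypl c) (hypl h)
  rw [finrank_hypl hc, finrank_hypl hh] at hsum
  have hsle : Module.finrank K (hypl c ⊔ hypl h : Submodule K (Fin 3 → K)) ≤ 3 := by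
    simpa using Submodule.finrank_le (hypl c ⊔ hypl h)
  have hge : 2 ≤ Module.finrank K (hypl c ⊔ hypl h : Submodule K (Fin 3 → K)) := by
    calc 2 = Module.finrank K (hypl c) := (finrank_hypl hc).symm
    _ ≤ _ := Submodule.finrank_mono le_sup_left
  have hs3 : Module.finrank K (hypl c ⊔ hypl h : Submodule K (Fin 3 → K)) = 3 := by
    rcases eq_or_lt_of_le hge with he | hlt
    · exfalso
      have h1 : hypl c = hypl c ⊔ hypl h :=
        Submodule.eq_of_le_of_finrank_le le_sup_left (by rw [← he, finrank_hypl hc])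
      have h2 : hypl h = hypl c ⊔ hypl h :=
        Submodule.eq_of_le_of_finrank_le le_sup_right (by rw [← he, finrank_hypl hh])
      exact hne (h1.trans h2.symm)
    · omega
  omega

end Stmt5Helpers

/-- if two codimension-2 flats `p₁ ≠ p₂` of `A ⊂ K^3` satisfy
`μ(p₁) + μ(p₂) = |A| - 2` and no plane of `A` contains both, then `t_A = 2`. -/
theorem stmt5 {K : Type*} [Field K] [CharZero K]
    (A : Finset (Fin 3 → K)) (hA : IsArrangement A)
    (p1 p2 : Submodule K (Fin 3 → K))
    (hp1 : ∃ c1 ∈ A, ∃ c2 ∈ A, c1 ≠ c2 ∧ p1 = hypl c1 ⊓ hypl c2 ∧ Module.finrank K p1 = 1)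
    (hp2 : ∃ c1 ∈ A, ∃ c2 ∈ A, c1 ≠ c2 ∧ p2 = hypl c1 ⊓ hypl c2 ∧ Module.finrank K p2 = 1)
    (hne : p1 ≠ p2)
    (hmu : {c : Fin 3 → K | c ∈ A ∧ p1 ≤ hypl c}.ncard
        + {c : Fin 3 → K | c ∈ A ∧ p2 ≤ hypl c}.ncard = A.card)
    (hline : ¬ ∃ c ∈ A, p1 ≤ hypl c ∧ p2 ≤ hypl c) :
    tA A = 2 := by
  classical
  obtain ⟨c1, hc1A, c2, hc2A, hc12, hp1eq, hp1r⟩ := hp1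
  obtain ⟨d1, hd1A, d2, hd2A, hd12, hp2eq, hp2r⟩ := hp2
  obtain ⟨hAnz, hAinj⟩ := hA
  have hp1le1 : p1 ≤ hypl c1 := hp1eq ▸ inf_le_left
  have hp1le2 : p1 ≤ hypl c2 := hp1eq ▸ inf_le_right
  have hp2le1 : p2 ≤ hypl d1 := hp2eq ▸ inf_le_left
  have hp2le2 : p2 ≤ hypl d2 := hp2eq ▸ inf_le_right
  -- every c ∈ A contains p1 or p2
  have hcover : ∀ c ∈ A, p1 ≤ hypl c ∨ p2 ≤ hypl c := by
    intro c hcA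
    set S1 := A.filter (fun c => p1 ≤ hypl c) with hS1
    set S2 := A.filter (fun c => p2 ≤ hypl c) with hS2
    have he1 : {c : Fin 3 → K | c ∈ A ∧ p1 ≤ hypl c} = ↑S1 := by
      ext x; simp [hS1, Finset.mem_filter]
    have he2 : {c : Fin 3 → K | c ∈ A ∧ p2 ≤ hypl c} = ↑S2 := by
      ext x; simp [hS2, Finset.mem_filter]
    rw [he1, he2, Set.ncard_coe_finset, Set.ncard_coe_finset] at hmu
    have hdisj : Disjoint S1 S2 := by
      rw [Finset.disjoint_left]
      intro a ha1 ha2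
      rw [hS1, Finset.mem_filter] at ha1
      rw [hS2, Finset.mem_filter] at ha2
      exact hline ⟨a, ha1.1, ha1.2, ha2.2⟩
    have hsub : S1 ∪ S2 ⊆ A := by
      intro a ha
      rcases Finset.mem_union.mp ha with h | h
      · exact (Finset.mem_filter.mp h).1
      · exact (Finset.mem_filter.mp h).1
    have hcard : (S1 ∪ S2).card = A.card := by
      rw [Finset.card_union_of_disjoint hdisj, hmu]
    have heq : S1 ∪ S2 = A := Finset.eq_of_subset_of_card_le hsub (le_of_eq hcard.symm)
    have : c ∈ S1 ∪ S2 := heq ▸ hcA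
    rcases Finset.mem_union.mp this with h | h
    · exact Or.inl (Finset.mem_filter.mp h).2
    · exact Or.inr (Finset.mem_filter.mp h).2
  -- pick nonzero vectors in p1, p2
  have hp1nb : p1 ≠ ⊥ := by
    intro h; rw [h, finrank_bot] at hp1r; omega
  have hp2nb : p2 ≠ ⊥ := by
    intro h; rw [h, finrank_bot] at hp2r; omega
  obtain ⟨v1, hv1p, hv1⟩ := Submodule.exists_mem_ne_zero_of_ne_bot hp1nb
  obtain ⟨v2, hv2p, hv2⟩ := Submodule.exists_mem_ne_zero_of_ne_bot hp2nb
  have hspan1 : Submodule.span K {v1} = p1 :=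
    Submodule.eq_of_le_of_finrank_le
      ((Submodule.span_singleton_le_iff_mem v1 p1).mpr hv1p)
      (by rw [hp1r, finrank_span_singleton hv1])
  have hspan2 : Submodule.span K {v2} = p2 :=
    Submodule.eq_of_le_of_finrank_le
      ((Submodule.span_singleton_le_iff_mem v2 p2).mpr hv2p)
      (by rw [hp2r, finrank_span_singleton hv2])
  -- v1, v2 independent; cross product gives h
  have hind : LinearIndependent K ![v1, v2] := by
    rw [linearIndependent_fin2]
    refine ⟨by simpa using hv2, fun a ha => ?_⟩
    apply hne
    simp only [Matrix.cons_val_one, Matrix.head_cons, Matrix.cons_val_zero] at ha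
    have hmem : v1 ∈ Submodule.span K {v2} := by
      rw [← ha]; exact Submodule.smul_mem _ a (Submodule.mem_span_singleton_self v2)
    have hle : p1 ≤ p2 := by
      rw [← hspan1, ← hspan2]
      exact (Submodule.span_singleton_le_iff_mem v1 _).mpr (by simpa using hmem)
    exact Submodule.eq_of_le_of_finrank_le hle (by omega)
  set h : Fin 3 → K := crossProduct v1 v2 with hhdef
  have hh0 : h ≠ 0 := crossProduct_ne_zero_iff_linearIndependent.mpr hind
  -- hypl h = p1 ⊔ p2
  have hv1h : v1 ∈ hypl h := by
    rw [hypl, LinearMap.mem_ker, ellf_dot, dotProduct_comm, hhdef]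
    exact dot_self_cross v1 v2
  have hv2h : v2 ∈ hypl h := by
    rw [hypl, LinearMap.mem_ker, ellf_dot, dotProduct_comm, hhdef]
    exact dot_cross_self v1 v2
  have hsuple : p1 ⊔ p2 ≤ hypl h := by
    apply sup_le
    · rw [← hspan1]; exact (Submodule.span_singleton_le_iff_mem v1 _).mpr hv1h
    · rw [← hspan2]; exact (Submodule.span_singleton_le_iff_mem v2 _).mpr hv2h
  have hinf0 : Module.finrank K (p1 ⊓ p2 : Submodule K (Fin 3 → K)) = 0 := by
    by_contra h0
    have hle1 : Module.finrank K (p1 ⊓ p2 : Submodule K (Fin 3 → K)) ≤ 1 := by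
      rw [← hp1r]; exact Submodule.finrank_mono inf_le_left
    have h1 : Module.finrank K (p1 ⊓ p2 : Submodule K (Fin 3 → K)) = 1 := by omega
    have e1 : p1 ⊓ p2 = p1 :=
      Submodule.eq_of_le_of_finrank_le inf_le_left (by omega)
    have e2 : p1 ⊓ p2 = p2 :=
      Submodule.eq_of_le_of_finrank_le inf_le_right (by omega)
    exact hne (e1.symm.trans e2)
  have hsupr : Module.finrank K (p1 ⊔ p2 : Submodule K (Fin 3 → K)) = 2 := by
    have := Submodule.finrank_sup_add_finrank_inf_eq p1 p2
    rw [hinf0, hp1r, hp2r] at this; omega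
  have hhypl : hypl h = p1 ⊔ p2 :=
    (Submodule.eq_of_le_of_finrank_le hsuple (by rw [hsupr, finrank_hypl hh0])).symm
  -- h is not in the arrangement
  have hnotin : NotInArr A h := by
    refine ⟨hh0, fun c hcA hceq => ?_⟩
    exact hline ⟨c, hcA, hceq ▸ hhypl ▸ le_sup_left, hceq ▸ hhypl ▸ le_sup_right⟩
  have hhne : ∀ c ∈ A, hypl c ≠ hypl h := fun c hc => hnotin.2 c hc
  -- restrictCount A h = 2
  have heqgen : ∀ c ∈ A, ∀ p : Submodule K (Fin 3 → K), Module.finrank K p = 1 →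
      p ≤ hypl c → p ≤ hypl h → hypl c ⊓ hypl h = p := by
    intro c hcA p hpr hpc hph
    have hdim : Module.finrank K (hypl c ⊓ hypl h : Submodule K (Fin 3 → K)) = 1 :=
      inf_dim_one (hAnz c hcA) hh0 (hhne c hcA)
    exact (Submodule.eq_of_le_of_finrank_le (le_inf hpc hph) (by omega)).symm
  have hp1h : p1 ≤ hypl h := hhypl ▸ le_sup_left
  have hp2h : p2 ≤ hypl h := hhypl ▸ le_sup_right
  have hrc : restrictCount A h = 2 := by
    rw [restrictCount]
    have himg : (A.image fun c => hypl c ⊓ hypl h) = {p1, p2} := by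
      ext q
      simp only [Finset.mem_image, Finset.mem_insert, Finset.mem_singleton]
      constructor
      · rintro ⟨c, hcA, rfl⟩
        rcases hcover c hcA with h1 | h2
        · exact Or.inl (heqgen c hcA p1 hp1r h1 hp1h)
        · exact Or.inr (heqgen c hcA p2 hp2r h2 hp2h)
      · rintro (hq | hq)
        · exact ⟨c1, hc1A, hq ▸ heqgen c1 hc1A p1 hp1r hp1le1 hp1h⟩
        · exact ⟨d1, hd1A, hq ▸ heqgen d1 hd1A p2 hp2r hp2le1 hp2h⟩
    convert congrArg Finset.card himg using 3
    rw [Finset.card_insert_of_notMem (by simpa using hne), Finset.card_singleton]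
  -- lower bound: every admissible count is ≥ 2
  have hlow : ∀ n ∈ {n | ∃ h' : Fin 3 → K, NotInArr A h' ∧ n = restrictCount A h'}, 2 ≤ n := by
    rintro n ⟨h', ⟨hh'0, hh'ne⟩, rfl⟩
    rw [restrictCount]
    by_contra hlt
    push_neg at hlt
    have hone : ∀ a ∈ (A.image fun c => hypl c ⊓ hypl h'),
        ∀ b ∈ (A.image fun c => hypl c ⊓ hypl h'), a = b :=
      Finset.card_le_one.mp (by convert Nat.le_of_lt_succ hlt)
    have key : ∀ e1 ∈ A, ∀ e2 ∈ A, ∀ p : Submodule K (Fin 3 → K),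
        Module.finrank K p = 1 → p = hypl e1 ⊓ hypl e2 →
        hypl e1 ⊓ hypl h' = p := by
      intro e1 he1 e2 he2 p hpr hp
      have hL : hypl e1 ⊓ hypl h' = hypl e2 ⊓ hypl h' :=
        hone _ (Finset.mem_image_of_mem _ he1) _ (Finset.mem_image_of_mem _ he2)
      have hdim : Module.finrank K (hypl e1 ⊓ hypl h' : Submodule K (Fin 3 → K)) = 1 :=
        inf_dim_one (hAnz e1 he1) hh'0 (hh'ne e1 he1)
      have hle : hypl e1 ⊓ hypl h' ≤ p := by
        rw [hp]
        exact le_inf inf_le_left (le_trans (le_of_eq hL) inf_le_left)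
      exact Submodule.eq_of_le_of_finrank_le hle (by omega)
    have k1 : hypl c1 ⊓ hypl h' = p1 := key c1 hc1A c2 hc2A p1 hp1r hp1eq
    have k2 : hypl d1 ⊓ hypl h' = p2 := key d1 hd1A d2 hd2A p2 hp2r hp2eq
    have hL : hypl c1 ⊓ hypl h' = hypl d1 ⊓ hypl h' :=
      hone _ (Finset.mem_image_of_mem _ hc1A) _ (Finset.mem_image_of_mem _ hd1A)
    exact hne (k1 ▸ k2 ▸ hL)
  have h2mem : 2 ∈ {n | ∃ h' : Fin 3 → K, NotInArr A h' ∧ n = restrictCount A h'} :=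
    ⟨h, hnotin, hrc.symm⟩
  rw [tA]
  exact le_antisymm (Nat.sInf_le h2mem) (le_csInf ⟨2, h2mem⟩ hlow)
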